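/- Let λ>0, β>0 and m a positive integer with m−1 ≤ β < m. There exist complex constants b_k^λ, for integers 0 ≤ k ≤ (m+1)/2, such that for all t,x,y>0: t^β ∂_t^β P_t^λ(x,y) = Σ_{k=0}^{⌊(m+1)/2⌋} b_k^λ t^{−2λ−1} (xy)^λ ∫_0^π (sin θ)^{2λ−1} φ^{λ,k}( √((x−y)² + 2xy(1−cos θ)) / t ) dθ. -/

import Mathlib

open MeasureTheory Real Set

noncomputable section

/-- The Segovia–Wheeden fractional derivative
`∂_t^β F(t) = (e^{-iπ(m-β)}/Γ(m-β)) ∫_0^∞ ∂_t^m F(t+s) s^{m-β-1} ds`. -/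
def fracDeriv (β : ℝ) (m : ℕ) (F : ℝ → ℂ) (t : ℝ) : ℂ :=
  (Complex.exp (-(π : ℂ) * Complex.I * ((m : ℂ) - (β : ℂ))) /
      ((Real.Gamma ((m : ℝ) - β) : ℝ) : ℂ)) *
    ∫ s in Set.Ioi (0 : ℝ), iteratedDeriv m F (t + s) * ((s ^ ((m : ℝ) - β - 1) : ℝ) : ℂ)

/-- The Bessel Poisson kernel `P_t^λ(x,y)`. -/
def besselPoissonKernel (lam t x y : ℝ) : ℝ :=
  (2 * lam * (x * y) ^ lam * t / π) *
    ∫ θ in Set.Ioo 0 π,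
      Real.sin θ ^ (2 * lam - 1) /
        ((x - y) ^ 2 + t ^ 2 + 2 * x * y * (1 - Real.cos θ)) ^ (lam + 1)

/-- The Bessel Poisson integral `P_t^λ(f)(x)`. -/
def besselPoisson (lam : ℝ) (f : ℝ → ℂ) (t x : ℝ) : ℂ :=
  ∫ y in Set.Ioi (0 : ℝ), (besselPoissonKernel lam t x y : ℂ) * f y

/-- The function `φ^{λ,k}`. -/
def phiLam (lam β : ℝ) (m k : ℕ) (z : ℝ) : ℝ :=
  ∫ v in Set.Ioi (0 : ℝ),
    (1 + v) ^ ((m : ℝ) + 1 - 2 * (k : ℝ)) * v ^ ((m : ℝ) - β - 1) /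
      ((1 + v) ^ 2 + z ^ 2) ^ (lam + (m : ℝ) - (k : ℝ) + 1)

namespace S3aux

/-- coefficients in the expansion of the m-th derivative -/
def aC (lam : ℝ) : ℕ → ℕ → ℝ
  | 0, 0 => 1
  | 0, _+1 => 0
  | j+1, 0 => -2*(lam+(j:ℝ)+1) * aC lam j 0
  | j+1, k+1 => -2*(lam+(j:ℝ)-(k:ℝ)) * aC lam j (k+1) + ((j:ℝ)+1-2*(k:ℝ)) * aC lam j k

lemma aC_eq_zero (lam : ℝ) : ∀ j k : ℕ, j + 1 < 2*k → aC lam j k = 0 := by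
  intro j
  induction j with
  | zero =>
    intro k hk
    match k, hk with
    | k+1, _ => rfl
  | succ j ih =>
    intro k hk
    match k, hk with
    | k+1, hk =>
      have h1 : aC lam j (k+1) = 0 := ih (k+1) (by omega)
      rcases Nat.lt_or_ge (j+1) (2*k) with h | h
      · have h2 : aC lam j k = 0 := ih k h
        simp [aC, h1, h2]
      · have hk2 : j + 1 = 2*k := by omega
        have : ((j:ℝ)+1-2*(k:ℝ)) = 0 := by
          have : ((j:ℝ)+1) = 2*(k:ℝ) := by exact_mod_cast congrArg (Nat.cast (R := ℝ)) hk2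
          linarith
        simp [aC, h1, this]

/-- the basic building block `u^{j+1-2k} (D+u²)^{-(λ+j-k+1)}` -/
def hF (lam : ℝ) (j k : ℕ) (D u : ℝ) : ℝ :=
  u ^ ((j:ℝ)+1-2*(k:ℝ)) * (D + u^2) ^ (-(lam + (j:ℝ) - (k:ℝ) + 1))

lemma hF_nonneg {lam : ℝ} {j k : ℕ} {D u : ℝ} (hD : 0 ≤ D) (hu : 0 ≤ u) :
    0 ≤ hF lam j k D u :=
  mul_nonneg (Real.rpow_nonneg hu _) (Real.rpow_nonneg (by positivity) _)

lemma rpow_bound {a b u e : ℝ} (ha : 0 < a) (h1 : a ≤ u) (h2 : u ≤ b) :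
    u ^ e ≤ a ^ e + b ^ e := by
  rcases le_or_gt 0 e with he | he
  · calc u ^ e ≤ b ^ e := Real.rpow_le_rpow (ha.le.trans h1) h2 he
      _ ≤ a ^ e + b ^ e := le_add_of_nonneg_left (Real.rpow_nonneg ha.le _)
  · calc u ^ e ≤ a ^ e := Real.rpow_le_rpow_of_nonpos ha h1 he.le
      _ ≤ a ^ e + b ^ e :=
        le_add_of_nonneg_right (Real.rpow_nonneg (by linarith [ha.trans_le (h1.trans h2)] : (0:ℝ) ≤ b) _)

lemma hF_le {lam : ℝ} {j k : ℕ} {D u a b : ℝ} (hD : 0 ≤ D) (ha : 0 < a)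
    (h1 : a ≤ u) (h2 : u ≤ b) (hq : 0 < lam + (j:ℝ) - (k:ℝ) + 1) :
    hF lam j k D u ≤ (a ^ ((j:ℝ)+1-2*(k:ℝ)) + b ^ ((j:ℝ)+1-2*(k:ℝ)))
      * (a^2) ^ (-(lam + (j:ℝ) - (k:ℝ) + 1)) := by
  have hu : 0 < u := ha.trans_le h1
  have hbase : a^2 ≤ D + u^2 := by nlinarith
  refine mul_le_mul (rpow_bound ha h1 h2)
    (Real.rpow_le_rpow_of_nonpos (by positivity) hbase (by linarith))
    (Real.rpow_nonneg (by positivity) _) ?_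
  have h0 : (0:ℝ) ≤ a ^ ((j:ℝ)+1-2*(k:ℝ)) := Real.rpow_nonneg ha.le _
  have hb0 : (0:ℝ) ≤ b := le_trans ha.le (h1.trans h2)
  have h0' : (0:ℝ) ≤ b ^ ((j:ℝ)+1-2*(k:ℝ)) := Real.rpow_nonneg hb0 _
  linarith

lemma hasDerivAt_hF {lam : ℝ} (j k : ℕ) {D u : ℝ} (hD : 0 ≤ D) (hu : 0 < u) :
    HasDerivAt (fun u => hF lam j k D u)
      (((j:ℝ)+1-2*(k:ℝ)) * hF lam (j+1) (k+1) D u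
        - 2*(lam + (j:ℝ) - (k:ℝ) + 1) * hF lam (j+1) k D u) u := by
  have hDu : 0 < D + u^2 := by positivity
  set e : ℝ := (j:ℝ)+1-2*(k:ℝ) with he
  set q : ℝ := -(lam + (j:ℝ) - (k:ℝ) + 1) with hq
  have h1 : HasDerivAt (fun u : ℝ => u ^ e) (e * u ^ (e - 1)) u :=
    Real.hasDerivAt_rpow_const (Or.inl hu.ne')
  have h2 : HasDerivAt (fun u : ℝ => D + u^2) (2*u) u := by
    simpa using ((hasDerivAt_pow 2 u).const_add D)
  have h3 : HasDerivAt (fun u : ℝ => (D + u^2) ^ q)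
      (q * (D + u^2) ^ (q - 1) * (2*u)) u := by
    have := HasDerivAt.rpow_const h2 (p := q) (Or.inl hDu.ne')
    convert this using 1
    ring
  have h4 := h1.fun_mul h3
  have e1 : e - 1 = ((j+1:ℕ):ℝ)+1-2*((k+1:ℕ):ℝ) := by push_cast; ring
  have e2 : q = -(lam + ((j+1:ℕ):ℝ) - ((k+1:ℕ):ℝ) + 1) := by push_cast [hq]; ring
  have e3 : q - 1 = -(lam + ((j+1:ℕ):ℝ) - ((k:ℕ):ℝ) + 1) := by push_cast [hq]; ring
  have e4 : u ^ e * u = u ^ (((j+1:ℕ):ℝ)+1-2*((k:ℕ):ℝ)) := by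
    rw [show ((j+1:ℕ):ℝ)+1-2*((k:ℕ):ℝ) = e + 1 by push_cast; ring, Real.rpow_add_one hu.ne']
  refine h4.congr_deriv (Eq.symm ?_)
  simp only [hF, ← e1, ← e2, ← e3]
  rw [← e4]
  ring


lemma integrableOn_sin_rpow {c : ℝ} (hc : -1 < c) :
    IntegrableOn (fun θ => Real.sin θ ^ c) (Ioo 0 π) := by
  have hmeas : ∀ s : Set ℝ, MeasurableSet s → s ⊆ Ioo 0 π →
      AEStronglyMeasurable (fun θ => Real.sin θ ^ c) (volume.restrict s) := by
    intro s hs hsub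
    refine (ContinuousOn.aestronglyMeasurable ?_ hs)
    refine Real.continuous_sin.continuousOn.rpow_const ?_
    intro θ hθ
    exact Or.inl (Real.sin_pos_of_pos_of_lt_pi (hsub hθ).1 (hsub hθ).2).ne'
  have hpi2 : Ioo (0:ℝ) π ⊆ Ioc 0 (π/2) ∪ Ioo (π/2) π := by
    intro θ hθ
    rcases le_or_gt θ (π/2) with h | h
    · exact Or.inl ⟨hθ.1, h⟩
    · exact Or.inr ⟨h, hθ.2⟩
  have h1 : IntegrableOn (fun θ => Real.sin θ ^ c) (Ioc 0 (π/2)) := by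
    rcases le_or_gt 0 c with hc0 | hc0
    · refine Integrable.mono' (g := fun _ => (1:ℝ))
        (integrableOn_const (by simp [Real.pi_pos])) (hmeas _ measurableSet_Ioc ?_) ?_
      · intro θ hθ; exact ⟨hθ.1, lt_of_le_of_lt hθ.2 (by linarith [Real.pi_pos])⟩
      · refine (ae_restrict_iff' measurableSet_Ioc).2 (Filter.Eventually.of_forall ?_)
        intro θ hθ
        have hs0 : 0 ≤ Real.sin θ := Real.sin_nonneg_of_nonneg_of_le_pi hθ.1.le
          (le_trans hθ.2 (by linarith [Real.pi_pos]))
        rw [Real.norm_eq_abs, abs_of_nonneg (Real.rpow_nonneg hs0 _)]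
        exact Real.rpow_le_one hs0 (Real.sin_le_one θ) hc0
    · refine Integrable.mono' (g := fun θ => (2/π) ^ c * θ ^ c) ?_
        (hmeas _ measurableSet_Ioc ?_) ?_
      · have : IntegrableOn (fun θ : ℝ => θ ^ c) (Ioc 0 (π/2)) := by
          rw [← intervalIntegrable_iff_integrableOn_Ioc_of_le (by positivity : (0:ℝ) ≤ π/2)]
          exact intervalIntegral.intervalIntegrable_rpow' hc
        exact this.const_mul _
      · intro θ hθ; exact ⟨hθ.1, lt_of_le_of_lt hθ.2 (by linarith [Real.pi_pos])⟩
      · refine (ae_restrict_iff' measurableSet_Ioc).2 (Filter.Eventually.of_forall ?_)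
        intro θ hθ
        have hs : 2/π * θ ≤ Real.sin θ := Real.mul_le_sin hθ.1.le hθ.2
        have hpos : 0 < 2/π * θ := by
          have hθ0 := hθ.1; have := Real.pi_pos; positivity
        have hs0 : 0 < Real.sin θ := lt_of_lt_of_le hpos hs
        rw [Real.norm_eq_abs, abs_of_nonneg (Real.rpow_nonneg hs0.le _)]
        calc Real.sin θ ^ c ≤ (2/π * θ) ^ c :=
              Real.rpow_le_rpow_of_nonpos hpos hs hc0.le
          _ = (2/π) ^ c * θ ^ c := Real.mul_rpow (by positivity) hθ.1.le
  have h2 : IntegrableOn (fun θ => Real.sin θ ^ c) (Ioo (π/2) π) := by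
    have hsub2 : Ioo (π/2) π ⊆ Ioo 0 π := by
      intro θ hθ; exact ⟨lt_trans (by positivity) hθ.1, hθ.2⟩
    rcases le_or_gt 0 c with hc0 | hc0
    · refine Integrable.mono' (g := fun _ => (1:ℝ))
        (integrableOn_const measure_Ioo_lt_top.ne) (hmeas _ measurableSet_Ioo hsub2) ?_
      refine (ae_restrict_iff' measurableSet_Ioo).2 (Filter.Eventually.of_forall ?_)
      intro θ hθ
      have hs0 : 0 ≤ Real.sin θ := Real.sin_nonneg_of_nonneg_of_le_pi
        (le_trans (by positivity) hθ.1.le) hθ.2.le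
      rw [Real.norm_eq_abs, abs_of_nonneg (Real.rpow_nonneg hs0 _)]
      exact Real.rpow_le_one hs0 (Real.sin_le_one θ) hc0
    · refine Integrable.mono' (g := fun θ => (2/π) ^ c * (π - θ) ^ c) ?_
        (hmeas _ measurableSet_Ioo hsub2) ?_
      · have hII2 : IntervalIntegrable (fun θ : ℝ => (π - θ) ^ c) volume (π/2) π := by
          have h := (intervalIntegral.intervalIntegrable_rpow' hc (a := 0) (b := π/2)).comp_sub_left π
          rw [show π - (0:ℝ) = π by ring, show π - π/2 = π/2 by ring] at h
          exact h.symm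
        have : IntegrableOn (fun θ : ℝ => (π - θ) ^ c) (Ioc (π/2) π) := by
          rw [← intervalIntegrable_iff_integrableOn_Ioc_of_le (by linarith [Real.pi_pos])]
          exact hII2
        exact (this.mono_set Ioo_subset_Ioc_self).const_mul _
      · refine (ae_restrict_iff' measurableSet_Ioo).2 (Filter.Eventually.of_forall ?_)
        intro θ hθ
        have hps : 0 < π - θ := by linarith [hθ.2]
        have hs : 2/π * (π - θ) ≤ Real.sin θ := by
          have h := Real.mul_le_sin (x := π - θ) hps.le (by linarith [hθ.1])
          rwa [Real.sin_pi_sub] at h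
        have hpos : 0 < 2/π * (π - θ) := by have := Real.pi_pos; positivity
        have hs0 : 0 < Real.sin θ := lt_of_lt_of_le hpos hs
        rw [Real.norm_eq_abs, abs_of_nonneg (Real.rpow_nonneg hs0.le _)]
        calc Real.sin θ ^ c ≤ (2/π * (π - θ)) ^ c :=
              Real.rpow_le_rpow_of_nonpos hpos hs hc0.le
          _ = (2/π) ^ c * (π - θ) ^ c := Real.mul_rpow (by positivity) hps.le
  exact (h1.union h2).mono_set hpi2


def Dv (x y θ : ℝ) : ℝ := (x-y)^2 + 2*x*y*(1-Real.cos θ)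

lemma Dv_nonneg {x y : ℝ} (hx : 0 < x) (hy : 0 < y) (θ : ℝ) : 0 ≤ Dv x y θ := by
  have := Real.cos_le_one θ
  have : 0 ≤ 1 - Real.cos θ := by linarith
  have h2 : 0 ≤ 2*x*y*(1-Real.cos θ) := by positivity
  have h3 : 0 ≤ (x-y)^2 := sq_nonneg _
  simp only [Dv]; linarith

lemma continuousOn_sin_hF (lam : ℝ) (j k : ℕ) {x y u : ℝ} (hx : 0 < x) (hy : 0 < y)
    (hu : 0 < u) :
    ContinuousOn (fun θ => Real.sin θ ^ (2*lam-1) * hF lam j k (Dv x y θ) u) (Ioo 0 π) := by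
  refine ContinuousOn.mul ?_ ?_
  · refine Real.continuous_sin.continuousOn.rpow_const ?_
    intro θ hθ
    exact Or.inl (Real.sin_pos_of_pos_of_lt_pi hθ.1 hθ.2).ne'
  · simp only [hF]
    refine ContinuousOn.mul continuousOn_const ?_
    refine ContinuousOn.rpow_const ?_ ?_
    · simp only [Dv]; fun_prop
    · intro θ hθ
      left
      have := Dv_nonneg hx hy θ
      positivity

/-- the θ-integral of `sin^{2λ-1} hF` -/
def II (lam x y : ℝ) (j k : ℕ) (u : ℝ) : ℝ :=
  ∫ θ in Ioo 0 π, Real.sin θ ^ (2*lam-1) * hF lam j k (Dv x y θ) u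

lemma integrableOn_sin_hF {lam : ℝ} (hlam : 0 < lam) (j k : ℕ) {x y u : ℝ}
    (hx : 0 < x) (hy : 0 < y) (hu : 0 < u) (hk : (k:ℝ) ≤ (j:ℝ)+1) :
    IntegrableOn (fun θ => Real.sin θ ^ (2*lam-1) * hF lam j k (Dv x y θ) u) (Ioo 0 π) := by
  have hq : 0 < lam + (j:ℝ) - (k:ℝ) + 1 := by linarith
  set B : ℝ := (u ^ ((j:ℝ)+1-2*(k:ℝ)) + u ^ ((j:ℝ)+1-2*(k:ℝ)))
      * (u^2) ^ (-(lam + (j:ℝ) - (k:ℝ) + 1)) with hB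
  refine Integrable.mono' (g := fun θ => Real.sin θ ^ (2*lam-1) * B)
    ((integrableOn_sin_rpow (by linarith)).mul_const _)
    ((continuousOn_sin_hF lam j k hx hy hu).aestronglyMeasurable measurableSet_Ioo) ?_
  refine (ae_restrict_iff' measurableSet_Ioo).2 (Filter.Eventually.of_forall ?_)
  intro θ hθ
  have hs0 : 0 ≤ Real.sin θ := Real.sin_nonneg_of_nonneg_of_le_pi hθ.1.le hθ.2.le
  have hsc : 0 ≤ Real.sin θ ^ (2*lam-1) := Real.rpow_nonneg hs0 _
  have hDn := Dv_nonneg hx hy θ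
  rw [Real.norm_eq_abs, abs_of_nonneg (mul_nonneg hsc (hF_nonneg hDn hu.le))]
  exact mul_le_mul_of_nonneg_left (hF_le hDn hu le_rfl le_rfl hq) hsc

lemma hasDerivAt_II {lam : ℝ} (hlam : 0 < lam) (j k : ℕ) {x y u₀ : ℝ}
    (hx : 0 < x) (hy : 0 < y) (hu₀ : 0 < u₀) (hk : (k:ℝ) ≤ (j:ℝ)+1) :
    HasDerivAt (II lam x y j k)
      (((j:ℝ)+1-2*(k:ℝ)) * II lam x y (j+1) (k+1) u₀
        - 2*(lam + (j:ℝ) - (k:ℝ) + 1) * II lam x y (j+1) k u₀) u₀ := by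
  have hk1 : ((k+1:ℕ):ℝ) ≤ ((j+1:ℕ):ℝ)+1 := by push_cast; linarith
  have hk2 : ((k:ℕ):ℝ) ≤ ((j+1:ℕ):ℝ)+1 := by push_cast; linarith
  set e : ℝ := (j:ℝ)+1-2*(k:ℝ)
  set c0 : ℝ := lam + (j:ℝ) - (k:ℝ) + 1 with hc0def
  have hc0 : 0 < c0 := by simp only [hc0def]; linarith
  set a : ℝ := u₀/2
  set b : ℝ := 3*u₀/2
  have ha : 0 < a := by positivity
  set B1 : ℝ := (a ^ (((j+1:ℕ):ℝ)+1-2*((k+1:ℕ):ℝ)) + b ^ (((j+1:ℕ):ℝ)+1-2*((k+1:ℕ):ℝ)))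
      * (a^2) ^ (-(lam + ((j+1:ℕ):ℝ) - ((k+1:ℕ):ℝ) + 1)) with hB1
  set B2 : ℝ := (a ^ (((j+1:ℕ):ℝ)+1-2*((k:ℕ):ℝ)) + b ^ (((j+1:ℕ):ℝ)+1-2*((k:ℕ):ℝ)))
      * (a^2) ^ (-(lam + ((j+1:ℕ):ℝ) - ((k:ℕ):ℝ) + 1)) with hB2
  have hB1n : 0 ≤ B1 := by
    apply mul_nonneg
    · have := Real.rpow_nonneg ha.le (((j+1:ℕ):ℝ)+1-2*((k+1:ℕ):ℝ))
      have hb : (0:ℝ) ≤ b := by positivity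
      have := Real.rpow_nonneg hb (((j+1:ℕ):ℝ)+1-2*((k+1:ℕ):ℝ))
      linarith
    · exact Real.rpow_nonneg (by positivity) _
  have hB2n : 0 ≤ B2 := by
    apply mul_nonneg
    · have := Real.rpow_nonneg ha.le (((j+1:ℕ):ℝ)+1-2*((k:ℕ):ℝ))
      have hb : (0:ℝ) ≤ b := by positivity
      have := Real.rpow_nonneg hb (((j+1:ℕ):ℝ)+1-2*((k:ℕ):ℝ))
      linarith
    · exact Real.rpow_nonneg (by positivity) _
  have key := hasDerivAt_integral_of_dominated_loc_of_deriv_le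
    (F := fun u θ => Real.sin θ ^ (2*lam-1) * hF lam j k (Dv x y θ) u)
    (F' := fun u θ => Real.sin θ ^ (2*lam-1) *
      (e * hF lam (j+1) (k+1) (Dv x y θ) u - 2*c0 * hF lam (j+1) k (Dv x y θ) u))
    (x₀ := u₀) (s := Metric.ball u₀ (u₀/2))
    (bound := fun θ => Real.sin θ ^ (2*lam-1) * (|e| * B1 + 2*c0 * B2))
    (μ := volume.restrict (Ioo 0 π)) (Metric.ball_mem_nhds _ (by positivity))
    ?_ (integrableOn_sin_hF hlam j k hx hy hu₀ hk) ?_ ?_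
    ((integrableOn_sin_rpow (by linarith)).mul_const _) ?_
  · have heq : (∫ θ in Ioo 0 π, Real.sin θ ^ (2*lam-1) *
        (e * hF lam (j+1) (k+1) (Dv x y θ) u₀ - 2*c0 * hF lam (j+1) k (Dv x y θ) u₀))
        = e * II lam x y (j+1) (k+1) u₀ - 2*c0 * II lam x y (j+1) k u₀ := by
      have i1 := integrableOn_sin_hF hlam (j+1) (k+1) hx hy hu₀ hk1
      have i2 := integrableOn_sin_hF hlam (j+1) k hx hy hu₀ hk2
      rw [show (fun θ => Real.sin θ ^ (2*lam-1) *
        (e * hF lam (j+1) (k+1) (Dv x y θ) u₀ - 2*c0 * hF lam (j+1) k (Dv x y θ) u₀))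
        = fun θ => e * (Real.sin θ ^ (2*lam-1) * hF lam (j+1) (k+1) (Dv x y θ) u₀)
          - 2*c0 * (Real.sin θ ^ (2*lam-1) * hF lam (j+1) k (Dv x y θ) u₀) by
          funext θ; ring]
      rw [integral_sub (i1.const_mul e) (i2.const_mul (2*c0)),
        integral_const_mul, integral_const_mul]
      rfl
    rw [heq] at key
    exact key.2
  -- measurability of F u for u near u₀
  · filter_upwards [IsOpen.mem_nhds isOpen_Ioi hu₀] with u hu
    exact ((continuousOn_sin_hF lam j k hx hy hu).aestronglyMeasurable measurableSet_Ioo)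
  -- measurability of F' u₀
  · refine ContinuousOn.aestronglyMeasurable ?_ measurableSet_Ioo
    refine ContinuousOn.mul ?_ ?_
    · refine Real.continuous_sin.continuousOn.rpow_const ?_
      intro θ hθ
      exact Or.inl (Real.sin_pos_of_pos_of_lt_pi hθ.1 hθ.2).ne'
    · refine ContinuousOn.sub ?_ ?_
      · refine ContinuousOn.mul continuousOn_const ?_
        simp only [hF]
        refine ContinuousOn.mul continuousOn_const (ContinuousOn.rpow_const ?_ ?_)
        · simp only [Dv]; fun_prop
        · intro θ hθ
          have := Dv_nonneg hx hy θ
          left; positivity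
      · refine ContinuousOn.mul continuousOn_const ?_
        simp only [hF]
        refine ContinuousOn.mul continuousOn_const (ContinuousOn.rpow_const ?_ ?_)
        · simp only [Dv]; fun_prop
        · intro θ hθ
          have := Dv_nonneg hx hy θ
          left; positivity
  -- the bound
  · refine (ae_restrict_iff' measurableSet_Ioo).2 (Filter.Eventually.of_forall ?_)
    intro θ hθ u hu
    have hab : a ≤ u ∧ u ≤ b := by
      rw [Metric.mem_ball, Real.dist_eq, abs_lt] at hu
      constructor
      · simp only [a]; linarith [hu.1]
      · simp only [b]; linarith [hu.2]
    have hu0 : 0 < u := lt_of_lt_of_le ha hab.1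
    have hs0 : 0 ≤ Real.sin θ := Real.sin_nonneg_of_nonneg_of_le_pi hθ.1.le hθ.2.le
    have hsc : 0 ≤ Real.sin θ ^ (2*lam-1) := Real.rpow_nonneg hs0 _
    have hDn := Dv_nonneg hx hy θ
    rw [Real.norm_eq_abs, abs_mul, abs_of_nonneg hsc]
    refine mul_le_mul_of_nonneg_left ?_ hsc
    have hq1 : 0 < lam + ((j+1:ℕ):ℝ) - ((k+1:ℕ):ℝ) + 1 := by push_cast; linarith
    have hq2 : 0 < lam + ((j+1:ℕ):ℝ) - ((k:ℕ):ℝ) + 1 := by push_cast; linarith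
    have b1 := hF_le (lam := lam) (j := j+1) (k := k+1) hDn ha hab.1 hab.2 hq1
    have b2 := hF_le (lam := lam) (j := j+1) (k := k) hDn ha hab.1 hab.2 hq2
    have n1 := hF_nonneg (lam := lam) (j := j+1) (k := k+1) (u := u) hDn hu0.le
    have n2 := hF_nonneg (lam := lam) (j := j+1) (k := k) (u := u) hDn hu0.le
    calc |e * hF lam (j+1) (k+1) (Dv x y θ) u - 2*c0 * hF lam (j+1) k (Dv x y θ) u|
        ≤ |e| * hF lam (j+1) (k+1) (Dv x y θ) u + 2*c0 * hF lam (j+1) k (Dv x y θ) u := by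
          refine (abs_sub _ _).trans ?_
          rw [abs_mul, abs_mul, abs_of_nonneg n1, abs_of_nonneg n2,
            abs_of_nonneg (by linarith : (0:ℝ) ≤ 2*c0)]
      _ ≤ |e| * B1 + 2*c0 * B2 := by
          refine add_le_add (mul_le_mul_of_nonneg_left ?_ (abs_nonneg e))
            (mul_le_mul_of_nonneg_left ?_ (by linarith : (0:ℝ) ≤ 2*c0))
          · simpa [hB1] using b1
          · simpa [hB2] using b2
  -- differentiability
  · refine (ae_restrict_iff' measurableSet_Ioo).2 (Filter.Eventually.of_forall ?_)
    intro θ hθ u hu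
    have hu0 : 0 < u := by
      rw [Metric.mem_ball, Real.dist_eq, abs_lt] at hu
      linarith [hu.1]
    have hDn := Dv_nonneg hx hy θ
    have hd := hasDerivAt_hF (lam := lam) j k hDn hu0
    have := hd.const_mul (Real.sin θ ^ (2*lam-1))
    exact this

lemma sum_step (lam : ℝ) (j : ℕ) (I' : ℕ → ℝ) :
    ∑ k ∈ Finset.range (j+2), aC lam j k *
      ((((j:ℝ)+1-2*(k:ℝ)) * I' (k+1)) - 2*(lam + (j:ℝ) - (k:ℝ) + 1) * I' k)
    = ∑ k ∈ Finset.range (j+3), aC lam (j+1) k * I' k := by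
  have hshift : ∑ k ∈ Finset.range (j+3), aC lam (j+1) k * I' k
      = ∑ k ∈ Finset.range (j+2), aC lam (j+1) (k+1) * I' (k+1) + aC lam (j+1) 0 * I' 0 :=
    Finset.sum_range_succ' _ _
  have hexp : ∀ k : ℕ, aC lam (j+1) (k+1)
      = -2*(lam+(j:ℝ)-(k:ℝ)) * aC lam j (k+1) + ((j:ℝ)+1-2*(k:ℝ)) * aC lam j k := fun k => rfl
  have h0 : aC lam (j+1) 0 = -2*(lam+(j:ℝ)+1) * aC lam j 0 := rfl
  have hsplit : ∑ k ∈ Finset.range (j+2), aC lam (j+1) (k+1) * I' (k+1)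
      = ∑ k ∈ Finset.range (j+2), (-2*(lam+(j:ℝ)-(k:ℝ)) * aC lam j (k+1) * I' (k+1))
        + ∑ k ∈ Finset.range (j+2), ((j:ℝ)+1-2*(k:ℝ)) * aC lam j k * I' (k+1) := by
    rw [← Finset.sum_add_distrib]
    refine Finset.sum_congr rfl fun k _ => ?_
    rw [hexp k]; ring
  have hback : ∑ k ∈ Finset.range (j+2), (-2*(lam+(j:ℝ)-(k:ℝ)) * aC lam j (k+1) * I' (k+1))
      + (-2*(lam+(j:ℝ)+1) * aC lam j 0 * I' 0)
      = ∑ k ∈ Finset.range (j+3), (-2*(lam+(j:ℝ)-(k:ℝ)+1) * aC lam j k * I' k) := by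
    rw [Finset.sum_range_succ' (fun k => -2*(lam+(j:ℝ)-(k:ℝ)+1) * aC lam j k * I' k) (j+2)]
    congr 1
    · refine Finset.sum_congr rfl fun k _ => ?_
      push_cast; ring
    · push_cast; ring
  have hlast : ∑ k ∈ Finset.range (j+3), (-2*(lam+(j:ℝ)-(k:ℝ)+1) * aC lam j k * I' k)
      = ∑ k ∈ Finset.range (j+2), (-2*(lam+(j:ℝ)-(k:ℝ)+1) * aC lam j k * I' k) := by
    rw [Finset.sum_range_succ]
    rw [aC_eq_zero lam j (j+2) (by omega)]
    ring
  rw [hshift, hsplit, h0]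
  rw [show ∑ k ∈ Finset.range (j+2), (-2*(lam+(j:ℝ)-(k:ℝ)) * aC lam j (k+1) * I' (k+1))
        + ∑ k ∈ Finset.range (j+2), ((j:ℝ)+1-2*(k:ℝ)) * aC lam j k * I' (k+1)
        + (-2*(lam+(j:ℝ)+1) * aC lam j 0) * I' 0
      = (∑ k ∈ Finset.range (j+2), (-2*(lam+(j:ℝ)-(k:ℝ)) * aC lam j (k+1) * I' (k+1))
        + (-2*(lam+(j:ℝ)+1) * aC lam j 0 * I' 0))
        + ∑ k ∈ Finset.range (j+2), ((j:ℝ)+1-2*(k:ℝ)) * aC lam j k * I' (k+1) by ring]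
  rw [hback, hlast, ← Finset.sum_add_distrib]
  refine (Finset.sum_congr rfl fun k _ => ?_).symm
  ring

/-- the sum `Σ_k a_{j,k} I_{j,k}(u)` -/
def GG (lam x y : ℝ) (j : ℕ) (u : ℝ) : ℝ :=
  ∑ k ∈ Finset.range (j+2), aC lam j k * II lam x y j k u

lemma hasDerivAt_GG {lam : ℝ} (hlam : 0 < lam) (j : ℕ) {x y u₀ : ℝ}
    (hx : 0 < x) (hy : 0 < y) (hu₀ : 0 < u₀) :
    HasDerivAt (GG lam x y j) (GG lam x y (j+1) u₀) u₀ := by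
  have hD : HasDerivAt (GG lam x y j)
      (∑ k ∈ Finset.range (j+2), aC lam j k *
        ((((j:ℝ)+1-2*(k:ℝ)) * II lam x y (j+1) (k+1) u₀)
          - 2*(lam + (j:ℝ) - (k:ℝ) + 1) * II lam x y (j+1) k u₀)) u₀ := by
    refine HasDerivAt.fun_sum fun k hkmem => ?_
    have hk : (k:ℝ) ≤ (j:ℝ)+1 := by
      have := Finset.mem_range.1 hkmem
      exact_mod_cast Nat.le_of_lt_succ (by omega)
    exact (hasDerivAt_II hlam j k hx hy hu₀ hk).const_mul (aC lam j k)
  rwa [sum_step lam j (fun k => II lam x y (j+1) k u₀)] at hD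

lemma kernel_eq {lam : ℝ} {x y u : ℝ} (hx : 0 < x) (hy : 0 < y) (hu : 0 < u) :
    besselPoissonKernel lam u x y = (2*lam*(x*y)^lam/π) * GG lam x y 0 u := by
  have hGG : GG lam x y 0 u = II lam x y 0 0 u := by
    simp [GG, Finset.sum_range_succ, aC]
  rw [hGG, besselPoissonKernel]
  have : II lam x y 0 0 u = u * ∫ θ in Ioo 0 π, Real.sin θ ^ (2*lam-1) /
      ((x - y) ^ 2 + u ^ 2 + 2 * x * y * (1 - Real.cos θ)) ^ (lam + 1) := by
    rw [← integral_const_mul]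
    refine setIntegral_congr_fun measurableSet_Ioo fun θ hθ => ?_
    have hA : (0:ℝ) ≤ (x - y) ^ 2 + u ^ 2 + 2 * x * y * (1 - Real.cos θ) := by
      have := Dv_nonneg hx hy θ
      simp only [Dv] at this
      nlinarith [sq_nonneg u]
    simp only [hF, Dv]
    rw [show ((0:ℕ):ℝ)+1-2*((0:ℕ):ℝ) = 1 by norm_num, Real.rpow_one,
      show -(lam + ((0:ℕ):ℝ) - ((0:ℕ):ℝ) + 1) = -(lam+1) by norm_num,
      show (x-y)^2 + 2*x*y*(1-Real.cos θ) + u^2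
        = (x - y) ^ 2 + u ^ 2 + 2 * x * y * (1 - Real.cos θ) by ring,
      Real.rpow_neg hA]
    rw [div_eq_mul_inv]
    ring
  rw [this]
  ring

lemma iteratedDeriv_kernel {lam : ℝ} (hlam : 0 < lam) {x y : ℝ}
    (hx : 0 < x) (hy : 0 < y) (j : ℕ) :
    ∀ u : ℝ, 0 < u →
      iteratedDeriv j (fun v => ((besselPoissonKernel lam v x y : ℝ) : ℂ)) u
        = (((2*lam*(x*y)^lam/π) * GG lam x y j u : ℝ) : ℂ) := by
  induction j with
  | zero =>
    intro u hu
    rw [iteratedDeriv_zero, kernel_eq hx hy hu]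
  | succ j ih =>
    intro u hu
    rw [iteratedDeriv_succ]
    have hev : (iteratedDeriv j (fun v => ((besselPoissonKernel lam v x y : ℝ) : ℂ)))
        =ᶠ[nhds u] (fun v => (((2*lam*(x*y)^lam/π) * GG lam x y j v : ℝ) : ℂ)) := by
      filter_upwards [IsOpen.mem_nhds isOpen_Ioi hu] with v hv
      exact ih v hv
    rw [hev.deriv_eq]
    have hd : HasDerivAt (fun v => (2*lam*(x*y)^lam/π) * GG lam x y j v)
        ((2*lam*(x*y)^lam/π) * GG lam x y (j+1) u) u :=
      (hasDerivAt_GG hlam j hx hy hu).const_mul _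
    exact hd.ofReal_comp.deriv

lemma intF2 {r p t : ℝ} (ht : 0 < t) (hr : r ≤ 0) (hp : -1 < p) (hrp : r + p < -1) :
    IntegrableOn (fun s => (t+s) ^ r * s ^ p) (Ioi (0:ℝ)) := by
  have hmeas : ∀ s : Set ℝ, MeasurableSet s → s ⊆ Ioi 0 →
      AEStronglyMeasurable (fun s => (t+s) ^ r * s ^ p) (volume.restrict s) := by
    intro s hs hsub
    refine ContinuousOn.aestronglyMeasurable (ContinuousOn.mul ?_ ?_) hs
    · refine (Continuous.continuousOn (by fun_prop)).rpow_const fun z hz => Or.inl ?_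
      have : (0:ℝ) < z := hsub hz
      positivity
    · exact continuous_id.continuousOn.rpow_const fun z hz => Or.inl (ne_of_gt (hsub hz))
  have h1 : IntegrableOn (fun s => (t+s) ^ r * s ^ p) (Ioc 0 1) := by
    refine Integrable.mono' (g := fun s => t ^ r * s ^ p)
      (Integrable.const_mul ?_ _) (hmeas _ measurableSet_Ioc Ioc_subset_Ioi_self) ?_
    · have : IntegrableOn (fun s : ℝ => s ^ p) (Ioc 0 1) := by
        rw [← intervalIntegrable_iff_integrableOn_Ioc_of_le zero_le_one]
        exact intervalIntegral.intervalIntegrable_rpow' hp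
      exact this
    · refine (ae_restrict_iff' measurableSet_Ioc).2 (Filter.Eventually.of_forall ?_)
      intro s hs
      have hs0 : 0 < s := hs.1
      rw [Real.norm_eq_abs, abs_of_nonneg (mul_nonneg (Real.rpow_nonneg (by linarith) _)
        (Real.rpow_nonneg hs0.le _))]
      exact mul_le_mul_of_nonneg_right
        (Real.rpow_le_rpow_of_nonpos ht (by linarith) hr) (Real.rpow_nonneg hs0.le _)
  have h2 : IntegrableOn (fun s => (t+s) ^ r * s ^ p) (Ioi 1) := by
    refine Integrable.mono' (g := fun s => s ^ (r + p))
      (integrableOn_Ioi_rpow_of_lt hrp one_pos) (hmeas _ measurableSet_Ioi ?_) ?_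
    · intro z hz; exact lt_trans one_pos (show (1:ℝ) < z from hz)
    · refine (ae_restrict_iff' measurableSet_Ioi).2 (Filter.Eventually.of_forall ?_)
      intro s hs
      have hs0 : (0:ℝ) < s := lt_trans one_pos hs
      rw [Real.norm_eq_abs, abs_of_nonneg (mul_nonneg (Real.rpow_nonneg (by linarith) _)
        (Real.rpow_nonneg hs0.le _))]
      show (t+s) ^ r * s ^ p ≤ s ^ (r + p)
      rw [Real.rpow_add hs0]
      exact mul_le_mul_of_nonneg_right
        (Real.rpow_le_rpow_of_nonpos hs0 (by linarith) hr) (Real.rpow_nonneg hs0.le _)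
  have := h1.union h2
  rwa [Ioc_union_Ioi_eq_Ioi zero_le_one] at this

lemma prodInt {lam β : ℝ} (hlam : 0 < lam) (hβ : 0 < β) {m : ℕ} (k : ℕ) {x y t : ℝ}
    (hx : 0 < x) (hy : 0 < y) (ht : 0 < t) (hβ2 : β < m) (hk : (k:ℝ) ≤ (m:ℝ)+1) :
    Integrable (fun z : ℝ × ℝ => Real.sin z.1 ^ (2*lam-1)
        * hF lam m k (Dv x y z.1) (t+z.2) * z.2 ^ ((m:ℝ)-β-1))
      ((volume.restrict (Ioo 0 π)).prod (volume.restrict (Ioi 0))) := by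
  set p : ℝ := (m:ℝ)-β-1 with hpdef
  set r : ℝ := -(m:ℝ)-2*lam-1 with hrdef
  have hr : r ≤ 0 := by simp only [hrdef]; push_cast; nlinarith [Nat.cast_nonneg (α := ℝ) m]
  have hp : -1 < p := by simp only [hpdef]; linarith
  have hrp : r + p < -1 := by simp only [hrdef, hpdef]; linarith
  have hq : -(lam + (m:ℝ) - (k:ℝ) + 1) ≤ 0 := by linarith
  refine Integrable.mono' (g := fun z => Real.sin z.1 ^ (2*lam-1) * ((t+z.2) ^ r * z.2 ^ p))
    (Integrable.mul_prod (integrableOn_sin_rpow (by linarith)) (intF2 ht hr hp hrp)) ?_ ?_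
  · rw [Measure.prod_restrict]
    refine ContinuousOn.aestronglyMeasurable ?_ (measurableSet_Ioo.prod measurableSet_Ioi)
    refine ContinuousOn.mul (ContinuousOn.mul ?_ ?_) ?_
    · refine (Real.continuous_sin.comp continuous_fst).continuousOn.rpow_const fun z hz =>
        Or.inl (Real.sin_pos_of_pos_of_lt_pi hz.1.1 hz.1.2).ne'
    · simp only [hF]
      refine ContinuousOn.mul ?_ ?_
      · refine (Continuous.continuousOn (by fun_prop)).rpow_const fun z hz => Or.inl ?_
        have : (0:ℝ) < z.2 := hz.2
        positivity
      · refine (Continuous.continuousOn (by simp only [Dv]; fun_prop)).rpow_const fun z hz =>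
          Or.inl ?_
        have h1 := Dv_nonneg hx hy z.1
        have h2 : (0:ℝ) < z.2 := hz.2
        positivity
    · exact (continuous_snd.continuousOn).rpow_const fun z hz => Or.inl (ne_of_gt hz.2)
  · rw [Measure.prod_restrict]
    refine (ae_restrict_iff' (measurableSet_Ioo.prod measurableSet_Ioi)).2
      (Filter.Eventually.of_forall ?_)
    rintro ⟨θ, s⟩ hz
    have hθ : θ ∈ Ioo 0 π := hz.1
    have hs : (0:ℝ) < s := hz.2
    have hts : 0 < t + s := by linarith
    have hsin0 : 0 ≤ Real.sin θ := Real.sin_nonneg_of_nonneg_of_le_pi hθ.1.le hθ.2.le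
    have hsc : 0 ≤ Real.sin θ ^ (2*lam-1) := Real.rpow_nonneg hsin0 _
    have hDn := Dv_nonneg hx hy θ
    have hhf : hF lam m k (Dv x y θ) (t+s) ≤ (t+s) ^ r := by
      have step1 : hF lam m k (Dv x y θ) (t+s)
          ≤ (t+s) ^ ((m:ℝ)+1-2*(k:ℝ)) * ((t+s)^2) ^ (-(lam + (m:ℝ) - (k:ℝ) + 1)) := by
        refine mul_le_mul_of_nonneg_left
          (Real.rpow_le_rpow_of_nonpos (by positivity) (by nlinarith) hq)
          (Real.rpow_nonneg hts.le _)
      have step2 : ((t+s)^2 : ℝ) ^ (-(lam + (m:ℝ) - (k:ℝ) + 1))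
          = (t+s) ^ (2 * (-(lam + (m:ℝ) - (k:ℝ) + 1))) := by
        rw [← Real.rpow_natCast (t+s) 2, ← Real.rpow_mul hts.le]
        norm_num
      refine step1.trans ?_
      rw [step2, ← Real.rpow_add hts]
      refine le_of_eq ?_
      congr 1
      simp only [hrdef]; ring
    rw [Real.norm_eq_abs, abs_of_nonneg (mul_nonneg (mul_nonneg hsc
      (hF_nonneg hDn hts.le)) (Real.rpow_nonneg hs.le _))]
    calc Real.sin θ ^ (2*lam-1) * hF lam m k (Dv x y θ) (t+s) * s ^ p
        ≤ Real.sin θ ^ (2*lam-1) * (t+s) ^ r * s ^ p :=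
          mul_le_mul_of_nonneg_right (mul_le_mul_of_nonneg_left hhf hsc)
            (Real.rpow_nonneg hs.le _)
      _ = Real.sin θ ^ (2*lam-1) * ((t+s) ^ r * s ^ p) := by ring

lemma inner_subst {lam β : ℝ} (m k : ℕ) {t D : ℝ} (ht : 0 < t) (hD : 0 ≤ D) :
    ∫ s in Ioi (0:ℝ), hF lam m k D (t+s) * s ^ ((m:ℝ)-β-1)
      = t ^ (-(2*lam)-1-β) * phiLam lam β m k (Real.sqrt D / t) := by
  set p : ℝ := (m:ℝ)-β-1 with hpdef
  set E : ℝ := (m:ℝ)+1-2*(k:ℝ) with hEdef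
  set q : ℝ := -(lam + (m:ℝ) - (k:ℝ) + 1) with hqdef
  set A : ℝ := E + 2*q + p with hAdef
  set g : ℝ → ℝ := fun s => hF lam m k D (t+s) * s ^ p with hgdef
  have h1 : (∫ v in Ioi (0:ℝ), g (t*v)) = t⁻¹ * ∫ s in Ioi (0:ℝ), g s := by
    simpa using integral_comp_mul_left_Ioi g 0 ht
  have h2 : ∫ s in Ioi (0:ℝ), g s = t * ∫ v in Ioi (0:ℝ), g (t*v) := by
    rw [h1]; field_simp
  have h3 : ∫ v in Ioi (0:ℝ), g (t*v)
      = t ^ A * phiLam lam β m k (Real.sqrt D / t) := by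
    rw [phiLam, ← integral_const_mul]
    refine setIntegral_congr_fun measurableSet_Ioi fun v hv => ?_
    have hv0 : (0:ℝ) < v := hv
    have h1v : (0:ℝ) < 1 + v := by linarith
    have hz2 : (Real.sqrt D / t)^2 = D / t^2 := by
      rw [div_pow, Real.sq_sqrt hD]
    have hW : (0:ℝ) ≤ (1+v)^2 + (Real.sqrt D / t)^2 := by positivity
    have hbase : D + (t + t*v)^2 = t^2 * ((1+v)^2 + (Real.sqrt D / t)^2) := by
      rw [hz2]; field_simp; ring
    have e1 : (t + t*v) ^ E = t ^ E * (1+v) ^ E := by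
      rw [show t + t*v = t*(1+v) by ring, Real.mul_rpow ht.le h1v.le]
    have e2 : (D + (t + t*v)^2) ^ q
        = t ^ (2*q) * ((1+v)^2 + (Real.sqrt D / t)^2) ^ q := by
      rw [hbase, Real.mul_rpow (by positivity) hW]
      congr 1
      rw [← Real.rpow_natCast t 2, ← Real.rpow_mul ht.le]
      norm_num
    have e3 : (t*v) ^ p = t ^ p * v ^ p := Real.mul_rpow ht.le hv0.le
    show hF lam m k D (t + t*v) * (t*v) ^ p = t ^ A *
      ((1 + v) ^ ((m:ℝ) + 1 - 2 * (k:ℝ)) * v ^ ((m:ℝ) - β - 1) /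
        ((1 + v) ^ 2 + (Real.sqrt D / t) ^ 2) ^ (lam + (m:ℝ) - (k:ℝ) + 1))
    rw [show hF lam m k D (t + t*v) = (t + t*v) ^ E * (D + (t+t*v)^2) ^ q from rfl,
      e1, e2, e3,
      div_eq_mul_inv ((1 + v) ^ ((m:ℝ) + 1 - 2 * (k:ℝ)) * v ^ ((m:ℝ) - β - 1)) _,
      ← Real.rpow_neg hW, ← hqdef, hAdef, Real.rpow_add ht, Real.rpow_add ht]
    ring
  rw [h2, h3, ← mul_assoc]
  congr 1
  have h4 := Real.rpow_add ht 1 A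
  rw [Real.rpow_one] at h4
  rw [← h4]
  congr 1
  simp only [hAdef, hEdef, hqdef, hpdef]; ring

lemma J_integrable {lam β : ℝ} (hlam : 0 < lam) (hβ : 0 < β) {m : ℕ} (k : ℕ) {x y t : ℝ}
    (hx : 0 < x) (hy : 0 < y) (ht : 0 < t) (hβ2 : β < m) (hk : (k:ℝ) ≤ (m:ℝ)+1) :
    Integrable (fun s => II lam x y m k (t+s) * s ^ ((m:ℝ)-β-1))
      (volume.restrict (Ioi 0)) := by
  have h := (prodInt hlam hβ k hx hy ht hβ2 hk).integral_prod_right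
  refine h.congr (Filter.Eventually.of_forall fun s => ?_)
  unfold II
  exact integral_mul_const (s ^ ((m:ℝ)-β-1))
    (fun θ => Real.sin θ ^ (2*lam-1) * hF lam m k (Dv x y θ) (t+s))

lemma Jk_eq {lam β : ℝ} (hlam : 0 < lam) (hβ : 0 < β) {m : ℕ} (k : ℕ) {x y t : ℝ}
    (hx : 0 < x) (hy : 0 < y) (ht : 0 < t) (hβ2 : β < m) (hk : (k:ℝ) ≤ (m:ℝ)+1) :
    ∫ s in Ioi (0:ℝ), II lam x y m k (t+s) * s ^ ((m:ℝ)-β-1)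
      = t ^ (-(2*lam)-1-β) * ∫ θ in Ioo 0 π, Real.sin θ ^ (2*lam-1) *
          phiLam lam β m k (Real.sqrt (Dv x y θ) / t) := by
  have hprod := prodInt hlam hβ k hx hy ht hβ2 hk
  have hswap := MeasureTheory.integral_integral_swap
    (f := fun θ s => Real.sin θ ^ (2*lam-1) * hF lam m k (Dv x y θ) (t+s) * s ^ ((m:ℝ)-β-1))
    (μ := volume.restrict (Ioo 0 π)) (ν := volume.restrict (Ioi 0)) hprod
  calc ∫ s in Ioi (0:ℝ), II lam x y m k (t+s) * s ^ ((m:ℝ)-β-1)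
      = ∫ s in Ioi (0:ℝ), ∫ θ in Ioo 0 π,
          Real.sin θ ^ (2*lam-1) * hF lam m k (Dv x y θ) (t+s) * s ^ ((m:ℝ)-β-1) := by
        refine setIntegral_congr_fun measurableSet_Ioi fun s hs => ?_
        unfold II
        exact (integral_mul_const (s ^ ((m:ℝ)-β-1))
          (fun θ => Real.sin θ ^ (2*lam-1) * hF lam m k (Dv x y θ) (t+s))).symm
    _ = ∫ θ in Ioo 0 π, ∫ s in Ioi (0:ℝ),
          Real.sin θ ^ (2*lam-1) * hF lam m k (Dv x y θ) (t+s) * s ^ ((m:ℝ)-β-1) :=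
        hswap.symm
    _ = ∫ θ in Ioo 0 π, Real.sin θ ^ (2*lam-1) *
          (t ^ (-(2*lam)-1-β) * phiLam lam β m k (Real.sqrt (Dv x y θ) / t)) := by
        refine setIntegral_congr_fun measurableSet_Ioo fun θ hθ => ?_
        rw [show (fun s => Real.sin θ ^ (2*lam-1) * hF lam m k (Dv x y θ) (t+s)
            * s ^ ((m:ℝ)-β-1)) = fun s => Real.sin θ ^ (2*lam-1) *
            (hF lam m k (Dv x y θ) (t+s) * s ^ ((m:ℝ)-β-1)) from funext fun s => by ring,
          integral_const_mul, inner_subst m k ht (Dv_nonneg hx hy θ)]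
    _ = t ^ (-(2*lam)-1-β) * ∫ θ in Ioo 0 π, Real.sin θ ^ (2*lam-1) *
          phiLam lam β m k (Real.sqrt (Dv x y θ) / t) := by
        rw [← integral_const_mul]
        refine setIntegral_congr_fun measurableSet_Ioo fun θ hθ => ?_
        ring

end S3aux


open S3aux in
/-- identity (3.2) of the paper: there are complex constants `b_k^λ`,
`0 ≤ k ≤ (m+1)/2`, such that
`t^β ∂_t^β P_t^λ(x,y) = Σ_k b_k^λ t^{-2λ-1} (xy)^λ ∫_0^π (sin θ)^{2λ-1} φ^{λ,k}(√((x-y)²+2xy(1-cos θ))/t) dθ`. -/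
theorem statement3 (lam β : ℝ) (hlam : 0 < lam) (hβ : 0 < β)
    (m : ℕ) (hm : 0 < m) (hm1 : (m : ℝ) - 1 ≤ β) (hm2 : β < m) :
    ∃ b : ℕ → ℂ, ∀ t x y : ℝ, 0 < t → 0 < x → 0 < y →
      ((t ^ β : ℝ) : ℂ) *
          fracDeriv β m (fun u => ((besselPoissonKernel lam u x y : ℝ) : ℂ)) t =
        ∑ k ∈ Finset.range ((m + 1) / 2 + 1),
          b k * ((t ^ (-(2 * lam) - 1) * (x * y) ^ lam : ℝ) : ℂ) *
            (((∫ θ in Set.Ioo 0 π, Real.sin θ ^ (2 * lam - 1) *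
                phiLam lam β m k
                  (Real.sqrt ((x - y) ^ 2 + 2 * x * y * (1 - Real.cos θ)) / t)) : ℝ) : ℂ) := by
  classical
  refine ⟨fun k => (Complex.exp (-(π : ℂ) * Complex.I * ((m : ℂ) - (β : ℂ))) /
      ((Real.Gamma ((m : ℝ) - β) : ℝ) : ℂ)) * ((2*lam/π : ℝ) : ℂ) * ((aC lam m k : ℝ) : ℂ),
    fun t x y ht hx hy => ?_⟩
  have hβm : β < (m:ℝ) := hm2
  have hkle : ∀ k : ℕ, k ∈ Finset.range (m+2) → (k:ℝ) ≤ (m:ℝ)+1 := by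
    intro k hk
    have h1 := Finset.mem_range.1 hk
    have h2 : k ≤ m+1 := by omega
    exact_mod_cast h2
  -- Step A : rewrite the complex integral as a real one
  have hA : (∫ s in Ioi (0:ℝ),
      iteratedDeriv m (fun u => ((besselPoissonKernel lam u x y : ℝ) : ℂ)) (t + s)
        * ((s ^ ((m:ℝ) - β - 1) : ℝ) : ℂ))
      = ((∫ s in Ioi (0:ℝ), (2*lam*(x*y)^lam/π) * GG lam x y m (t+s)
          * s ^ ((m:ℝ)-β-1) : ℝ) : ℂ) := by
    have hcast : (∫ s in Ioi (0:ℝ), (((2*lam*(x*y)^lam/π) * GG lam x y m (t+s)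
          * s ^ ((m:ℝ)-β-1) : ℝ) : ℂ))
        = ((∫ s in Ioi (0:ℝ), (2*lam*(x*y)^lam/π) * GG lam x y m (t+s)
          * s ^ ((m:ℝ)-β-1) : ℝ) : ℂ) := integral_ofReal (𝕜 := ℂ)
    rw [← hcast]
    refine setIntegral_congr_fun measurableSet_Ioi fun s hs => ?_
    have hs0 : (0:ℝ) < s := hs
    have hts : 0 < t + s := by linarith
    rw [iteratedDeriv_kernel hlam hx hy m (t+s) hts]
    push_cast
    ring
  -- Step B : compute the real integral
  have hB : (∫ s in Ioi (0:ℝ), (2*lam*(x*y)^lam/π) * GG lam x y m (t+s) * s ^ ((m:ℝ)-β-1))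
      = ∑ k ∈ Finset.range (m+2), ((2*lam*(x*y)^lam/π) * aC lam m k)
          * (t ^ (-(2*lam)-1-β) * ∫ θ in Ioo 0 π, Real.sin θ ^ (2*lam-1) *
              phiLam lam β m k (Real.sqrt (Dv x y θ) / t)) := by
    have hint : ∀ k ∈ Finset.range (m+2), Integrable (fun s =>
        ((2*lam*(x*y)^lam/π) * aC lam m k) * (II lam x y m k (t+s) * s ^ ((m:ℝ)-β-1)))
        (volume.restrict (Ioi 0)) := fun k hk =>
      (J_integrable hlam hβ k hx hy ht hβm (hkle k hk)).const_mul _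
    calc (∫ s in Ioi (0:ℝ), (2*lam*(x*y)^lam/π) * GG lam x y m (t+s) * s ^ ((m:ℝ)-β-1))
        = ∫ s in Ioi (0:ℝ), ∑ k ∈ Finset.range (m+2),
            ((2*lam*(x*y)^lam/π) * aC lam m k) * (II lam x y m k (t+s) * s ^ ((m:ℝ)-β-1)) := by
          refine setIntegral_congr_fun measurableSet_Ioi fun s hs => ?_
          simp only [GG]
          rw [Finset.mul_sum, Finset.sum_mul]
          exact Finset.sum_congr rfl fun k _ => by ring
      _ = ∑ k ∈ Finset.range (m+2), ∫ s in Ioi (0:ℝ),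
            ((2*lam*(x*y)^lam/π) * aC lam m k) * (II lam x y m k (t+s) * s ^ ((m:ℝ)-β-1)) :=
          integral_finset_sum _ hint
      _ = ∑ k ∈ Finset.range (m+2), ((2*lam*(x*y)^lam/π) * aC lam m k)
          * (t ^ (-(2*lam)-1-β) * ∫ θ in Ioo 0 π, Real.sin θ ^ (2*lam-1) *
              phiLam lam β m k (Real.sqrt (Dv x y θ) / t)) := by
          refine Finset.sum_congr rfl fun k hk => ?_
          rw [integral_const_mul, Jk_eq hlam hβ k hx hy ht hβm (hkle k hk)]
  -- extend the sum on the right-hand side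
  have hext : (∑ k ∈ Finset.range ((m + 1) / 2 + 1),
        ((Complex.exp (-(π : ℂ) * Complex.I * ((m : ℂ) - (β : ℂ))) /
          ((Real.Gamma ((m : ℝ) - β) : ℝ) : ℂ)) * ((2*lam/π : ℝ) : ℂ) * ((aC lam m k : ℝ) : ℂ))
          * ((t ^ (-(2 * lam) - 1) * (x * y) ^ lam : ℝ) : ℂ) *
          (((∫ θ in Set.Ioo 0 π, Real.sin θ ^ (2 * lam - 1) *
              phiLam lam β m k
                (Real.sqrt ((x - y) ^ 2 + 2 * x * y * (1 - Real.cos θ)) / t)) : ℝ) : ℂ))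
      = ∑ k ∈ Finset.range (m+2),
        ((Complex.exp (-(π : ℂ) * Complex.I * ((m : ℂ) - (β : ℂ))) /
          ((Real.Gamma ((m : ℝ) - β) : ℝ) : ℂ)) * ((2*lam/π : ℝ) : ℂ) * ((aC lam m k : ℝ) : ℂ))
          * ((t ^ (-(2 * lam) - 1) * (x * y) ^ lam : ℝ) : ℂ) *
          (((∫ θ in Set.Ioo 0 π, Real.sin θ ^ (2 * lam - 1) *
              phiLam lam β m k
                (Real.sqrt ((x - y) ^ 2 + 2 * x * y * (1 - Real.cos θ)) / t)) : ℝ) : ℂ) := by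
    refine Finset.sum_subset (Finset.range_subset_range.2 (by omega)) fun k hk1 hk2 => ?_
    have hk1' := Finset.mem_range.1 hk1
    have hk2' : ¬ k < (m+1)/2 + 1 := fun h => hk2 (Finset.mem_range.2 h)
    have hz : aC lam m k = 0 := aC_eq_zero lam m k (by omega)
    simp [hz]
  have hrw : t ^ β * t ^ (-(2*lam)-1-β) = t ^ (-(2*lam)-1) := by
    rw [← Real.rpow_add ht]
    congr 1
    ring
  rw [fracDeriv, hA, hB, hext, Complex.ofReal_sum, Finset.mul_sum, Finset.mul_sum]
  refine Finset.sum_congr rfl fun k hk => ?_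
  have hΦ : (∫ θ in Ioo 0 π, Real.sin θ ^ (2*lam-1) *
        phiLam lam β m k (Real.sqrt (Dv x y θ) / t))
      = ∫ θ in Set.Ioo 0 π, Real.sin θ ^ (2 * lam - 1) *
          phiLam lam β m k (Real.sqrt ((x - y) ^ 2 + 2 * x * y * (1 - Real.cos θ)) / t) := rfl
  set Φ : ℝ := ∫ θ in Set.Ioo 0 π, Real.sin θ ^ (2 * lam - 1) *
      phiLam lam β m k (Real.sqrt ((x - y) ^ 2 + 2 * x * y * (1 - Real.cos θ)) / t) with hΦdef
  rw [hΦ]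
  have hreal : t ^ β * (((2*lam*(x*y)^lam/π) * aC lam m k) * (t ^ (-(2*lam)-1-β) * Φ))
      = (2*lam/π) * aC lam m k * ((t ^ (-(2*lam)-1) * (x*y)^lam) * Φ) := by
    rw [← hrw]
    ring
  calc ((t ^ β : ℝ) : ℂ) * ((Complex.exp (-(π : ℂ) * Complex.I * ((m : ℂ) - (β : ℂ))) /
          ((Real.Gamma ((m : ℝ) - β) : ℝ) : ℂ)) *
        ((((2*lam*(x*y)^lam/π) * aC lam m k) * (t ^ (-(2*lam)-1-β) * Φ) : ℝ) : ℂ))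
      = (Complex.exp (-(π : ℂ) * Complex.I * ((m : ℂ) - (β : ℂ))) /
          ((Real.Gamma ((m : ℝ) - β) : ℝ) : ℂ)) *
        ((t ^ β * (((2*lam*(x*y)^lam/π) * aC lam m k) * (t ^ (-(2*lam)-1-β) * Φ)) : ℝ) : ℂ) := by
        push_cast
        ring
    _ = (Complex.exp (-(π : ℂ) * Complex.I * ((m : ℂ) - (β : ℂ))) /
          ((Real.Gamma ((m : ℝ) - β) : ℝ) : ℂ)) *
        (((2*lam/π) * aC lam m k * ((t ^ (-(2*lam)-1) * (x*y)^lam) * Φ) : ℝ) : ℂ) := by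
        rw [hreal]
    _ = ((Complex.exp (-(π : ℂ) * Complex.I * ((m : ℂ) - (β : ℂ))) /
          ((Real.Gamma ((m : ℝ) - β) : ℝ) : ℂ)) * ((2*lam/π : ℝ) : ℂ) * ((aC lam m k : ℝ) : ℂ))
          * ((t ^ (-(2 * lam) - 1) * (x * y) ^ lam : ℝ) : ℂ) * ((Φ : ℝ) : ℂ) := by
        push_cast
        ring
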